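/- Let n ≥ 1 and let z, z' ∈ ℝⁿ differ in at most one coordinate. Then the symmetry test statistic T_K(z) = d_K(F̂_z, F̂_{−z}), where −z denotes the vector (−z_1, …, −z_n), satisfies |T_K(z) − T_K(z')| ≤ 2/n; i.e., the sensitivity of the paired-data Kuiper symmetry statistic is at most 2/n. -/

import Mathlib

open Filter

/-- Empirical cdf of a sample `x : Fin n → ℝ`. -/
noncomputable def ecdf {n : ℕ} (x : Fin n → ℝ) (t : ℝ) : ℝ :=
  (Finset.univ.filter (fun i => x i ≤ t)).card / n

/-- Kuiper distance. -/
noncomputable def dK (F G : ℝ → ℝ) : ℝ :=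
  (⨆ t : ℝ, (F t - G t)) + (⨆ s : ℝ, (G s - F s))

lemma ecdf_nonneg {n : ℕ} (x : Fin n → ℝ) (t : ℝ) : 0 ≤ ecdf x t := by
  unfold ecdf; positivity

lemma ecdf_le_one {n : ℕ} (x : Fin n → ℝ) (t : ℝ) : ecdf x t ≤ 1 := by
  unfold ecdf
  rcases Nat.eq_zero_or_pos n with h | h
  · subst h; simp
  · rw [div_le_one (by exact_mod_cast h)]
    exact_mod_cast (Finset.card_filter_le _ _).trans (le_of_eq (Finset.card_fin n))

lemma ecdf_bdd {n : ℕ} (x y : Fin n → ℝ) :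
    BddAbove (Set.range fun t => ecdf x t - ecdf y t) := by
  refine ⟨1, ?_⟩
  rintro _ ⟨t, rfl⟩
  have := ecdf_le_one x t
  have := ecdf_nonneg y t
  simp only
  linarith

/-- If `x` and `y` agree off `i` and `x i ≤ y i`, then `ecdf y ≤ ecdf x ≤ ecdf y + 1/n`. -/
lemma ecdf_adj {n : ℕ} (x y : Fin n → ℝ) (i : Fin n)
    (hxy : ∀ j, j ≠ i → x j = y j) (hle : x i ≤ y i) (t : ℝ) :
    ecdf y t ≤ ecdf x t ∧ ecdf x t ≤ ecdf y t + 1 / n := by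
  rcases Nat.eq_zero_or_pos n with h | h
  · subst h; exact absurd i.2 (by simp)
  have hnpos : (0:ℝ) < n := by exact_mod_cast h
  set A := Finset.univ.filter (fun j => x j ≤ t) with hA
  set B := Finset.univ.filter (fun j => y j ≤ t) with hB
  have hBA : B ⊆ A := by
    intro j hj
    simp only [hA, hB, Finset.mem_filter, Finset.mem_univ, true_and] at *
    rcases eq_or_ne j i with rfl | hne
    · linarith
    · rw [hxy j hne]; exact hj
  have hcard : A.card ≤ B.card + 1 := by
    have hsub : A \ B ⊆ {i} := by
      intro j hj
      simp only [hA, hB, Finset.mem_sdiff, Finset.mem_filter, Finset.mem_univ, true_and,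
        not_le, Finset.mem_singleton] at *
      by_contra hne
      rw [hxy j hne] at hj
      linarith [hj.1, hj.2]
    calc A.card ≤ (A \ B).card + B.card := by
          rw [Finset.card_sdiff_add_card_eq_card hBA]
      _ ≤ 1 + B.card := by
          gcongr
          simpa using Finset.card_le_card hsub
      _ = B.card + 1 := by ring
  constructor
  · unfold ecdf
    rw [div_le_div_iff_of_pos_right hnpos]
    exact_mod_cast Finset.card_le_card hBA
  · unfold ecdf
    rw [← add_div, div_le_div_iff_of_pos_right hnpos]
    exact_mod_cast hcard

/-- Symmetric Kolmogorov-ish sum bound for adjacent vectors. -/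
lemma sup_sum_adj {n : ℕ} (x y : Fin n → ℝ) (i : Fin n)
    (hxy : ∀ j, j ≠ i → x j = y j) :
    (⨆ t : ℝ, (ecdf x t - ecdf y t)) + (⨆ t : ℝ, (ecdf y t - ecdf x t)) ≤ 1 / n := by
  have hn : 0 < n := n.pos_of_ne_zero (by rintro rfl; exact absurd i.2 (by simp))
  have hnpos : (0:ℝ) < n := by exact_mod_cast hn
  rcases le_total (x i) (y i) with hle | hle
  · have h1 : (⨆ t : ℝ, (ecdf y t - ecdf x t)) ≤ 0 :=
      ciSup_le fun t => by linarith [(ecdf_adj x y i hxy hle t).1]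
    have h2 : (⨆ t : ℝ, (ecdf x t - ecdf y t)) ≤ 1 / n :=
      ciSup_le fun t => by linarith [(ecdf_adj x y i hxy hle t).2]
    linarith
  · have hxy' : ∀ j, j ≠ i → y j = x j := fun j hj => (hxy j hj).symm
    have h1 : (⨆ t : ℝ, (ecdf x t - ecdf y t)) ≤ 0 :=
      ciSup_le fun t => by linarith [(ecdf_adj y x i hxy' hle t).1]
    have h2 : (⨆ t : ℝ, (ecdf y t - ecdf x t)) ≤ 1 / n :=
      ciSup_le fun t => by linarith [(ecdf_adj y x i hxy' hle t).2]
    linarith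

/-- Triangle-type inequality for the suprema. -/
lemma sup_tri {n : ℕ} (f f' g g' : Fin n → ℝ) :
    (⨆ t : ℝ, (ecdf f t - ecdf g t)) ≤
      (⨆ t : ℝ, (ecdf f' t - ecdf g' t)) + (⨆ t : ℝ, (ecdf f t - ecdf f' t)) +
        (⨆ t : ℝ, (ecdf g' t - ecdf g t)) := by
  refine ciSup_le fun t => ?_
  have h1 := le_ciSup (ecdf_bdd f' g') t
  have h2 := le_ciSup (ecdf_bdd f f') t
  have h3 := le_ciSup (ecdf_bdd g' g) t
  linarith

lemma dK_side {n : ℕ} (z z' : Fin n → ℝ) (i : Fin n)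
    (hxy : ∀ j, j ≠ i → z j = z' j) :
    dK (ecdf z) (ecdf (fun i => -z i)) ≤
      dK (ecdf z') (ecdf (fun i => -z' i)) + 2 / n := by
  have hn : 0 < n := n.pos_of_ne_zero (by rintro rfl; exact absurd i.2 (by simp))
  have hneg : ∀ j, j ≠ i → (fun k => -z k) j = (fun k => -z' k) j := by
    intro j hj; simp [hxy j hj]
  have h1 := sup_tri z z' (fun k => -z k) (fun k => -z' k)
  have h2 := sup_tri (fun k => -z k) (fun k => -z' k) z z'
  have h3 := sup_sum_adj z z' i hxy
  have h4 := sup_sum_adj (fun k => -z k) (fun k => -z' k) i hneg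
  unfold dK
  have : (2:ℝ) / n = 1 / n + 1 / n := by ring
  rw [this]
  linarith

theorem symmetry_Kuiper_sensitivity {n : ℕ} (hn : 1 ≤ n) (z z' : Fin n → ℝ)
    (hadj : hammingDist z z' ≤ 1) :
    |dK (ecdf z) (ecdf (fun i => -z i)) -
      dK (ecdf z') (ecdf (fun i => -z' i))| ≤ 2 / n := by
  have hnpos : (0:ℝ) < n := by exact_mod_cast hn
  by_cases hzz : z = z'
  · subst hzz; simp; positivity
  · -- extract the single differing coordinate
    obtain ⟨i, hi⟩ : ∃ i, z i ≠ z' i := by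
      by_contra h
      push_neg at h
      exact hzz (funext h)
    have hxy : ∀ j, j ≠ i → z j = z' j := by
      intro j hj
      by_contra hne
      have hmem : ∀ k, z k ≠ z' k → k ∈ Finset.univ.filter (fun k => z k ≠ z' k) := by
        intro k hk; simp [hk]
      have hcard : ({j, i} : Finset (Fin n)) ⊆ Finset.univ.filter (fun k => z k ≠ z' k) := by
        intro k hk
        rcases Finset.mem_insert.mp hk with rfl | hk
        · exact hmem _ hne
        · rw [Finset.mem_singleton] at hk; subst hk; exact hmem _ hi
      have h2 : 2 ≤ hammingDist z z' := by
        have := Finset.card_le_card hcard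
        rwa [Finset.card_insert_of_notMem (by simpa using hj), Finset.card_singleton] at this
      omega
    have hxy' : ∀ j, j ≠ i → z' j = z j := fun j hj => (hxy j hj).symm
    have h1 := dK_side z z' i hxy
    have h2 := dK_side z' z i hxy'
    rw [abs_sub_le_iff]
    constructor <;> linarith
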